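/- Let H be a finite-dimensional Hopf algebra over a field K of characteristic zero, and let α : H ⊗ H → K be a linear map satisfying the 2-cocycle condition α(x₁,y₁)α(x₂y₂,z) = α(y₁,z₁)α(x,y₂z₂) and the unity condition α(1,x) = α(x,1) = ε(x). Define γ ∈ H* by γ(x) = α(x₁, S(x₂)). Then α is invertible in the convolution algebra (H ⊗ H)* if and only if γ is invertible in the convolution algebra H*. -/

import Mathlib

open TensorProduct LinearMap

universe u

section HopfDefs

variable (K : Type u) [Field K]

/-- Convolution product of two linear maps from a coalgebra `C` to an algebra `A`. -/
noncomputable def convH {C A : Type u} [AddCommGroup C] [Module K C] [Coalgebra K C]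
    [Ring A] [Algebra K A] (f g : C →ₗ[K] A) : C →ₗ[K] A :=
  LinearMap.mul' K A ∘ₗ TensorProduct.map f g ∘ₗ Coalgebra.comul

variable (H : Type u) [Ring H] [HopfAlgebra K H]

/-- `x ⊗ y ↦ α(x₁ ⊗ y₁) • x₂ * y₂`, the multiplication of the cocycle deformation `^αH`. -/
noncomputable def aMul (α : H ⊗[K] H →ₗ[K] K) : H ⊗[K] H →ₗ[K] H :=
  convH K (Algebra.linearMap K H ∘ₗ α) (LinearMap.mul' K H)

/-- `x ⊗ (y ⊗ z) ↦ α(x₁,y₁) α(x₂y₂, z)` -/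
noncomputable def cocycleLHS (α : H ⊗[K] H →ₗ[K] K) : H ⊗[K] (H ⊗[K] H) →ₗ[K] K :=
  convH K
    (LinearMap.mul' K K ∘ₗ TensorProduct.map α Coalgebra.counit ∘ₗ
      (TensorProduct.assoc K H H H).symm.toLinearMap)
    (α ∘ₗ TensorProduct.map (LinearMap.mul' K H) LinearMap.id ∘ₗ
      (TensorProduct.assoc K H H H).symm.toLinearMap)

/-- `x ⊗ (y ⊗ z) ↦ α(y₁,z₁) α(x, y₂z₂)` -/
noncomputable def cocycleRHS (α : H ⊗[K] H →ₗ[K] K) : H ⊗[K] (H ⊗[K] H) →ₗ[K] K :=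
  convH K
    (LinearMap.mul' K K ∘ₗ TensorProduct.map Coalgebra.counit α)
    (α ∘ₗ TensorProduct.map LinearMap.id (LinearMap.mul' K H))

/-- A Hopf 2-cocycle on `H`: convolution invertible, satisfying the associativity (cocycle)
condition and the unity condition. -/
structure IsHopfCocycle (α : H ⊗[K] H →ₗ[K] K) : Prop where
  conv_invertible : ∃ β : H ⊗[K] H →ₗ[K] K,
    convH K α β = Coalgebra.counit ∧ convH K β α = Coalgebra.counit
  cocycle : cocycleLHS K H α = cocycleRHS K H α
  unit_left : ∀ x : H, α (1 ⊗ₜ[K] x) = Coalgebra.counit x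
  unit_right : ∀ x : H, α (x ⊗ₜ[K] 1) = Coalgebra.counit x

/-- `γ(x) = α(x₁, S(x₂))`. -/
noncomputable def cocycleGamma (α : H ⊗[K] H →ₗ[K] K) : H →ₗ[K] K :=
  α ∘ₗ TensorProduct.map LinearMap.id (HopfAlgebra.antipode (R := K)) ∘ₗ Coalgebra.comul

/-- The twisted antipode `S̃(x) = γ'(x₂) • S(x₁)`, where `γ'` is the convolution inverse
of `γ`. -/
noncomputable def tAntipode (γ' : H →ₗ[K] K) : H →ₗ[K] H :=
  convH K (HopfAlgebra.antipode (R := K)) (Algebra.linearMap K H ∘ₗ γ')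

/-- `A_f : x ↦ f(x₂) • x₁`, the action of `f ∈ H*` on `^αH`. -/
noncomputable def Af (f : H →ₗ[K] K) : H →ₗ[K] H :=
  convH K LinearMap.id (Algebra.linearMap K H ∘ₗ f)

/-- The map `M : x ⊗ y ↦ (x ·_α y₁) ⊗ y₂`. -/
noncomputable def Mmap (α : H ⊗[K] H →ₗ[K] K) : H ⊗[K] H →ₗ[K] H ⊗[K] H :=
  TensorProduct.map (aMul K H α) LinearMap.id ∘ₗ
    (TensorProduct.assoc K H H H).symm.toLinearMap ∘ₗ
      TensorProduct.map LinearMap.id Coalgebra.comul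

/-- The map `T : x ⊗ h ↦ (x ·_α S̃(h₁)) ⊗ h₂`. -/
noncomputable def Tmap (α : H ⊗[K] H →ₗ[K] K) (γ' : H →ₗ[K] K) :
    H ⊗[K] H →ₗ[K] H ⊗[K] H :=
  TensorProduct.map (aMul K H α) LinearMap.id ∘ₗ
    (TensorProduct.assoc K H H H).symm.toLinearMap ∘ₗ
      TensorProduct.map LinearMap.id
        (TensorProduct.map (tAntipode K H γ') LinearMap.id ∘ₗ Coalgebra.comul)

/-- `ν ↦ (x ↦ ν(x₁) • x₂)`. -/
noncomputable def nuMap (ν : H →ₗ[K] K) : H →ₗ[K] H :=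
  convH K (Algebra.linearMap K H ∘ₗ ν) LinearMap.id

/-- `φ : H →ₗ[K] H` is an isomorphism of `H`-comodule algebras `^αH → ^{α'}H`. -/
noncomputable def IsDeformIso (α α' : H ⊗[K] H →ₗ[K] K) (φ : H →ₗ[K] H) : Prop :=
  Function.Bijective φ ∧ φ 1 = 1 ∧
    φ ∘ₗ aMul K H α = aMul K H α' ∘ₗ TensorProduct.map φ φ ∧
    Coalgebra.comul ∘ₗ φ = TensorProduct.map φ LinearMap.id ∘ₗ (Coalgebra.comul (A := H))

end HopfDefs

section Infra

open Coalgebra HopfAlgebra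

variable {K : Type u} [Field K]
variable {C : Type u} [AddCommGroup C] [Module K C] [Coalgebra K C]
variable {D : Type u} [AddCommGroup D] [Module K D] [Coalgebra K D]
variable {A : Type u} [Ring A] [Algebra K A]

lemma convH_apply_repr (f g : C →ₗ[K] A) {ι : Type*} {x : C} (r : Coalgebra.Repr K x ι) :
    convH K f g x = ∑ i ∈ r.index, f (r.left i) * g (r.right i) := by
  simp only [convH, LinearMap.comp_apply, ← r.eq, map_sum, TensorProduct.map_tmul,
    LinearMap.mul'_apply]

lemma sum_counit_smul {W : Type*} [AddCommGroup W] [Module K W]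
    {ι : Type*} {x : C} (r : Coalgebra.Repr K x ι) (F : C →ₗ[K] W) :
    ∑ i ∈ r.index, counit (R := K) (r.left i) • F (r.right i) = F x := by
  have h := congrArg ((TensorProduct.lid K W).toLinearMap ∘ₗ LinearMap.lTensor K F)
    (Coalgebra.sum_counit_tmul_eq r)
  simp only [map_sum, LinearMap.coe_comp, LinearEquiv.coe_coe, Function.comp_apply,
    LinearMap.lTensor_tmul, TensorProduct.lid_tmul, one_smul] at h
  exact h

lemma sum_smul_counit {W : Type*} [AddCommGroup W] [Module K W]
    {ι : Type*} {x : C} (r : Coalgebra.Repr K x ι) (F : C →ₗ[K] W) :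
    ∑ i ∈ r.index, counit (R := K) (r.right i) • F (r.left i) = F x := by
  have h := congrArg ((TensorProduct.rid K W).toLinearMap ∘ₗ LinearMap.rTensor K F)
    (Coalgebra.sum_tmul_counit_eq r)
  simp only [map_sum, LinearMap.coe_comp, LinearEquiv.coe_coe, Function.comp_apply,
    LinearMap.rTensor_tmul, TensorProduct.rid_tmul, one_smul] at h
  exact h

/-- The convolution unit. -/
noncomputable def convUnit (K : Type u) [Field K] (C A : Type u) [AddCommGroup C] [Module K C]
    [Coalgebra K C] [Ring A] [Algebra K A] : C →ₗ[K] A :=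
  Algebra.linearMap K A ∘ₗ counit

lemma convH_unit_left (f : C →ₗ[K] A) : convH K (convUnit K C A) f = f := by
  ext x
  rw [convH_apply_repr _ _ (ℛ K x)]
  simp only [convUnit, LinearMap.comp_apply, Algebra.linearMap_apply, ← Algebra.smul_def]
  exact sum_counit_smul (ℛ K x) f

lemma convH_unit_right (f : C →ₗ[K] A) : convH K f (convUnit K C A) = f := by
  ext x
  rw [convH_apply_repr _ _ (ℛ K x)]
  simp only [convUnit, LinearMap.comp_apply, Algebra.linearMap_apply]
  rw [Finset.sum_congr rfl (fun i _ => (Algebra.commutes _ _).symm)]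
  simp only [← Algebra.smul_def]
  exact sum_smul_counit (ℛ K x) f

lemma convUnit_eq_counit : convUnit K C K = counit := by
  ext x; simp [convUnit]

lemma convH_assoc (f g h : C →ₗ[K] A) :
    convH K (convH K f g) h = convH K f (convH K g h) := by
  ext x
  set r := ℛ K x
  set a₁ : (i : r.ι) → Coalgebra.Repr K (r.left i) (C × C) := fun i => ℛ K (r.left i)
  set a₂ : (i : r.ι) → Coalgebra.Repr K (r.right i) (C × C) := fun i => ℛ K (r.right i)
  have key := congrArg (LinearMap.mul' K A ∘ₗ TensorProduct.map f
      (LinearMap.mul' K A ∘ₗ TensorProduct.map g h)) (Coalgebra.sum_tmul_tmul_eq r a₁ a₂)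
  simp only [map_sum, LinearMap.comp_apply, TensorProduct.map_tmul, LinearMap.mul'_apply] at key
  rw [convH_apply_repr (convH K f g) h r, convH_apply_repr f (convH K g h) r]
  calc ∑ i ∈ r.index, convH K f g (r.left i) * h (r.right i)
      = ∑ i ∈ r.index, ∑ j ∈ (a₁ i).index,
          f ((a₁ i).left j) * (g ((a₁ i).right j) * h (r.right i)) := by
        refine Finset.sum_congr rfl fun i _ => ?_
        rw [convH_apply_repr f g (a₁ i), Finset.sum_mul]
        exact Finset.sum_congr rfl fun j _ => mul_assoc _ _ _
    _ = ∑ i ∈ r.index, ∑ j ∈ (a₂ i).index,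
          f (r.left i) * (g ((a₂ i).left j) * h ((a₂ i).right j)) := key
    _ = ∑ i ∈ r.index, f (r.left i) * convH K g h (r.right i) := by
        refine Finset.sum_congr rfl fun i _ => ?_
        rw [convH_apply_repr g h (a₂ i), Finset.mul_sum]

lemma convH_zero_right (f : C →ₗ[K] A) : convH K f 0 = 0 := by
  ext x; rw [convH_apply_repr _ _ (ℛ K x)]; simp

lemma convH_add_right (f g h : C →ₗ[K] A) : convH K f (g + h) = convH K f g + convH K f h := by
  ext x
  rw [LinearMap.add_apply, convH_apply_repr f (g + h) (ℛ K x), convH_apply_repr f g (ℛ K x),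
    convH_apply_repr f h (ℛ K x), ← Finset.sum_add_distrib]
  simp [mul_add]

lemma convH_smul_right (c : K) (f g : C →ₗ[K] A) : convH K f (c • g) = c • convH K f g := by
  ext x
  rw [LinearMap.smul_apply, convH_apply_repr f (c • g) (ℛ K x), convH_apply_repr f g (ℛ K x),
    Finset.smul_sum]
  simp [Algebra.mul_smul_comm]

/-- Left convolution multiplication as a linear endomorphism. -/
noncomputable def convLmul (a : C →ₗ[K] A) : (C →ₗ[K] A) →ₗ[K] (C →ₗ[K] A) where
  toFun f := convH K a f
  map_add' f g := convH_add_right a f g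
  map_smul' c f := convH_smul_right c a f

/-- In finite dimensions, a right convolution inverse is a left inverse. -/
lemma convH_inv_symm [FiniteDimensional K C] {a b : C →ₗ[K] K}
    (hab : convH K a b = convUnit K C K) : convH K b a = convUnit K C K := by
  have hsurj : Function.Surjective (convLmul (K := K) a) := fun f =>
    ⟨convH K b f, by simp only [convLmul, LinearMap.coe_mk, AddHom.coe_mk,
      ← convH_assoc, hab, convH_unit_left]⟩
  have hinj : Function.Injective (convLmul (K := K) a) :=
    (LinearMap.injective_iff_surjective).2 hsurj
  apply hinj
  show convH K a (convH K b a) = convH K a (convUnit K C K)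
  rw [← convH_assoc, hab, convH_unit_left, convH_unit_right]

lemma convH_exists_inv [FiniteDimensional K C] {a : C →ₗ[K] K}
    (h : ∀ f : C →ₗ[K] K, convH K a f = 0 → f = 0) :
    ∃ b, convH K a b = convUnit K C K := by
  have hinj : Function.Injective (convLmul (K := K) a) := by
    intro f g hfg
    have h0 : convH K a (f - g) = 0 := by
      have : convLmul (K := K) a (f - g) = 0 := by rw [map_sub, hfg, sub_self]
      exact this
    exact sub_eq_zero.mp (h _ h0)
  have hsurj := (LinearMap.injective_iff_surjective).1 hinj
  obtain ⟨b, hb⟩ := hsurj (convUnit K C K)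
  exact ⟨b, hb⟩

end Infra

section Hopf

open Coalgebra HopfAlgebra Bialgebra

variable {K : Type u} [Field K]
variable {H : Type u} [Ring H] [HopfAlgebra K H]
variable {A : Type u} [Ring A] [Algebra K A]

/-- For an algebra hom `ψ : H →ₐ A`, `ψ * (ψ∘S) = unit`. -/
lemma convH_algHom_antipode (ψ : H →ₐ[K] A) :
    convH K ψ.toLinearMap (ψ.toLinearMap ∘ₗ antipode (R := K)) = convUnit K H A := by
  ext x
  rw [convH_apply_repr _ _ (ℛ K x)]
  simp only [LinearMap.comp_apply, AlgHom.toLinearMap_apply, convUnit, Algebra.linearMap_apply]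
  rw [Finset.sum_congr rfl (fun i _ => (map_mul ψ _ _).symm), ← map_sum ψ,
    HopfAlgebra.sum_mul_antipode_eq_algebraMap_counit (ℛ K x), AlgHom.commutes]

lemma convH_antipode_algHom (ψ : H →ₐ[K] A) :
    convH K (ψ.toLinearMap ∘ₗ antipode (R := K)) ψ.toLinearMap = convUnit K H A := by
  ext x
  rw [convH_apply_repr _ _ (ℛ K x)]
  simp only [LinearMap.comp_apply, AlgHom.toLinearMap_apply, convUnit, Algebra.linearMap_apply]
  rw [Finset.sum_congr rfl (fun i _ => (map_mul ψ _ _).symm), ← map_sum ψ,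
    HopfAlgebra.sum_antipode_mul_eq_algebraMap_counit (ℛ K x), AlgHom.commutes]

/-- `Δ = incL * incR` in `Hom(H, H⊗H)`. -/
lemma comul_eq_conv :
    (Coalgebra.comul : H →ₗ[K] H ⊗[K] H) =
      convH K (Algebra.TensorProduct.includeLeft (S := K)).toLinearMap
        (Algebra.TensorProduct.includeRight (R := K) (A := H) (B := H)).toLinearMap := by
  ext x
  rw [convH_apply_repr _ _ (ℛ K x), ← (ℛ K x).eq]
  refine Finset.sum_congr rfl fun i _ => ?_
  simp [Algebra.TensorProduct.includeLeft_apply, Algebra.TensorProduct.includeRight_apply,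
    Algebra.TensorProduct.tmul_mul_tmul]

/-- `Δ * (Δ∘S) = unit` in `Hom(H, H⊗H)`. -/
lemma comul_conv_comul_antipode :
    convH K (Coalgebra.comul : H →ₗ[K] H ⊗[K] H)
      ((Coalgebra.comul : H →ₗ[K] H ⊗[K] H) ∘ₗ antipode (R := K)) =
      convUnit K H (H ⊗[K] H) := by
  ext x
  rw [convH_apply_repr _ _ (ℛ K x)]
  simp only [LinearMap.comp_apply, convUnit, Algebra.linearMap_apply]
  rw [Finset.sum_congr rfl
    (fun i _ => (Bialgebra.comul_mul ((ℛ K x).left i) (antipode (R := K) ((ℛ K x).right i))).symm),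
    ← map_sum (Coalgebra.comul : H →ₗ[K] H ⊗[K] H),
    HopfAlgebra.sum_mul_antipode_eq_algebraMap_counit (ℛ K x)]
  exact Bialgebra.comul_algebraMap _

/-- `Δ ∘ S = (incR∘S) * (incL∘S)`. -/
lemma comul_comp_antipode :
    (Coalgebra.comul : H →ₗ[K] H ⊗[K] H) ∘ₗ antipode (R := K) =
      convH K ((Algebra.TensorProduct.includeRight (R := K) (A := H) (B := H)).toLinearMap
          ∘ₗ antipode (R := K))
        ((Algebra.TensorProduct.includeLeft (S := K) (R := K) (A := H) (B := H)).toLinearMap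
          ∘ₗ antipode (R := K)) := by
  have h2 : convH K (convH K
      ((Algebra.TensorProduct.includeRight (R := K) (A := H) (B := H)).toLinearMap
        ∘ₗ antipode (R := K))
      ((Algebra.TensorProduct.includeLeft (S := K) (R := K) (A := H) (B := H)).toLinearMap
        ∘ₗ antipode (R := K)))
      (Coalgebra.comul : H →ₗ[K] H ⊗[K] H) = convUnit K H (H ⊗[K] H) := by
    rw [comul_eq_conv, convH_assoc]
    rw [← convH_assoc ((Algebra.TensorProduct.includeLeft (S := K) (R := K) (A := H)
      (B := H)).toLinearMap ∘ₗ antipode (R := K))]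
    rw [convH_antipode_algHom (Algebra.TensorProduct.includeLeft (S := K) (R := K) (A := H)
      (B := H))]
    rw [convH_unit_left]
    exact convH_antipode_algHom (Algebra.TensorProduct.includeRight (R := K) (A := H) (B := H))
  calc (Coalgebra.comul : H →ₗ[K] H ⊗[K] H) ∘ₗ antipode (R := K)
      = convH K (convUnit K H (H ⊗[K] H))
          ((Coalgebra.comul : H →ₗ[K] H ⊗[K] H) ∘ₗ antipode (R := K)) :=
        (convH_unit_left _).symm
    _ = convH K (convH K (convH K
          ((Algebra.TensorProduct.includeRight (R := K) (A := H) (B := H)).toLinearMap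
            ∘ₗ antipode (R := K))
          ((Algebra.TensorProduct.includeLeft (S := K) (R := K) (A := H) (B := H)).toLinearMap
            ∘ₗ antipode (R := K)))
          (Coalgebra.comul : H →ₗ[K] H ⊗[K] H))
          ((Coalgebra.comul : H →ₗ[K] H ⊗[K] H) ∘ₗ antipode (R := K)) := by rw [h2]
    _ = convH K (convH K
          ((Algebra.TensorProduct.includeRight (R := K) (A := H) (B := H)).toLinearMap
            ∘ₗ antipode (R := K))
          ((Algebra.TensorProduct.includeLeft (S := K) (R := K) (A := H) (B := H)).toLinearMap
            ∘ₗ antipode (R := K)))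
          (convH K (Coalgebra.comul : H →ₗ[K] H ⊗[K] H)
            ((Coalgebra.comul : H →ₗ[K] H ⊗[K] H) ∘ₗ antipode (R := K))) := convH_assoc _ _ _
    _ = _ := by rw [comul_conv_comul_antipode, convH_unit_right]

/-- Sweedler form: `Δ(S x) = ∑ S x₂ ⊗ S x₁`. -/
lemma comul_antipode_repr {ι : Type*} {x : H} (r : Coalgebra.Repr K x ι) :
    Coalgebra.comul (R := K) (antipode (R := K) x) =
      ∑ i ∈ r.index, antipode (R := K) (r.right i) ⊗ₜ[K] antipode (R := K) (r.left i) := by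
  have := congrFun (congrArg DFunLike.coe (comul_comp_antipode (K := K) (H := H))) x
  rw [LinearMap.comp_apply] at this
  rw [this, convH_apply_repr _ _ r]
  refine Finset.sum_congr rfl fun i _ => ?_
  simp [Algebra.TensorProduct.includeLeft_apply, Algebra.TensorProduct.includeRight_apply,
    Algebra.TensorProduct.tmul_mul_tmul]

/-- `ε ∘ S = ε`. -/
lemma counit_antipode (x : H) :
    counit (R := K) (antipode (R := K) x) = counit (R := K) x := by
  have h1 : ∑ i ∈ (ℛ K x).index,
      counit (R := K) ((ℛ K x).right i) • ((ℛ K x).left i) = x :=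
    sum_smul_counit (ℛ K x) LinearMap.id
  calc counit (R := K) (antipode (R := K) x)
      = counit (R := K) (antipode (R := K)
          (∑ i ∈ (ℛ K x).index, counit (R := K) ((ℛ K x).right i) • ((ℛ K x).left i))) := by
        rw [h1]
    _ = ∑ i ∈ (ℛ K x).index, counit (R := K) (antipode (R := K) ((ℛ K x).left i))
          * counit (R := K) ((ℛ K x).right i) := by
        rw [map_sum, map_sum]
        exact Finset.sum_congr rfl fun i _ => by
          simp only [map_smul, smul_eq_mul]; ring
    _ = ∑ i ∈ (ℛ K x).index, counit (R := K)
          (antipode (R := K) ((ℛ K x).left i) * ((ℛ K x).right i)) := by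
        refine Finset.sum_congr rfl fun i _ => ?_
        rw [Bialgebra.counit_mul]
    _ = counit (R := K) x := by
        rw [← map_sum, HopfAlgebra.sum_antipode_mul_eq_algebraMap_counit (ℛ K x), Bialgebra.counit_algebraMap]

end Hopf

section Tensor

open Coalgebra HopfAlgebra

variable {K : Type u} [Field K]
variable {C : Type u} [AddCommGroup C] [Module K C] [Coalgebra K C]
variable {D : Type u} [AddCommGroup D] [Module K D] [Coalgebra K D]
variable {A : Type u} [Ring A] [Algebra K A]

lemma comul_tmul_eq {ι κ : Type*} {u : C} {v : D} (ru : Coalgebra.Repr K u ι) (rv : Coalgebra.Repr K v κ) :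
    Coalgebra.comul (R := K) (u ⊗ₜ[K] v) =
      ∑ i ∈ ru.index, ∑ j ∈ rv.index,
        (ru.left i ⊗ₜ[K] rv.left j) ⊗ₜ[K] (ru.right i ⊗ₜ[K] rv.right j) := by
  have h : Coalgebra.comul (R := K) (u ⊗ₜ[K] v) =
      TensorProduct.tensorTensorTensorComm K C C D D
        (Coalgebra.comul u ⊗ₜ Coalgebra.comul v) := rfl
  rw [h, ← ru.eq, ← rv.eq, TensorProduct.sum_tmul]
  rw [map_sum]
  refine Finset.sum_congr rfl fun i _ => ?_
  rw [TensorProduct.tmul_sum, map_sum]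
  exact Finset.sum_congr rfl fun j _ => by
    simp [TensorProduct.tensorTensorTensorComm_tmul]

/-- A representation of the comultiplication of a pure tensor. -/
noncomputable def tensorRepr {ι κ : Type*} {u : C} {v : D} (ru : Coalgebra.Repr K u ι)
    (rv : Coalgebra.Repr K v κ) : Coalgebra.Repr K (u ⊗ₜ[K] v) (ι × κ) where
  index := ru.index ×ˢ rv.index
  left := fun p => ru.left p.1 ⊗ₜ[K] rv.left p.2
  right := fun p => ru.right p.1 ⊗ₜ[K] rv.right p.2
  eq := by rw [comul_tmul_eq ru rv, Finset.sum_product]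

@[simp] lemma tensorRepr_left {ι κ : Type*} {u : C} {v : D} (ru : Coalgebra.Repr K u ι)
    (rv : Coalgebra.Repr K v κ) (p : ru.ι × rv.ι) :
    (tensorRepr ru rv).left p = ru.left p.1 ⊗ₜ[K] rv.left p.2 := rfl

@[simp] lemma tensorRepr_right {ι κ : Type*} {u : C} {v : D} (ru : Coalgebra.Repr K u ι)
    (rv : Coalgebra.Repr K v κ) (p : ru.ι × rv.ι) :
    (tensorRepr ru rv).right p = ru.right p.1 ⊗ₜ[K] rv.right p.2 := rfl

lemma convH_tmul_repr {ι κ : Type*} (f g : (C ⊗[K] D) →ₗ[K] A) {u : C} {v : D}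
    (ru : Coalgebra.Repr K u ι) (rv : Coalgebra.Repr K v κ) :
    convH K f g (u ⊗ₜ[K] v) = ∑ i ∈ ru.index, ∑ j ∈ rv.index,
      f (ru.left i ⊗ₜ[K] rv.left j) * g (ru.right i ⊗ₜ[K] rv.right j) := by
  rw [convH_apply_repr f g (tensorRepr ru rv), ← Finset.sum_product']
  rfl

lemma convH_comp_coalgHom (π : C →ₗ[K] D)
    (hcomul : Coalgebra.comul ∘ₗ π = TensorProduct.map π π ∘ₗ Coalgebra.comul)
    (f g : D →ₗ[K] A) :
    convH K f g ∘ₗ π = convH K (f ∘ₗ π) (g ∘ₗ π) := by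
  unfold convH
  rw [LinearMap.comp_assoc, LinearMap.comp_assoc, hcomul, TensorProduct.map_comp,
    LinearMap.comp_assoc]

end Tensor

section Pi

open Coalgebra HopfAlgebra

variable {K : Type u} [Field K]
variable {H : Type u} [Ring H] [HopfAlgebra K H]

/-- `π : H ⊗ H → H`, `x ⊗ y ↦ ε(x) y`. -/
noncomputable def piL (K : Type u) [Field K] (H : Type u) [Ring H] [HopfAlgebra K H] :
    H ⊗[K] H →ₗ[K] H :=
  (TensorProduct.lid K H).toLinearMap ∘ₗ LinearMap.rTensor H (Coalgebra.counit (R := K))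

lemma piL_tmul (x y : H) : piL K H (x ⊗ₜ[K] y) = Coalgebra.counit (R := K) x • y := by
  simp [piL]

lemma counit_comp_piL :
    (Coalgebra.counit : H →ₗ[K] K) ∘ₗ piL K H = (Coalgebra.counit : H ⊗[K] H →ₗ[K] K) := by
  apply TensorProduct.ext'
  intro x y
  have h : Coalgebra.counit (R := K) (x ⊗ₜ[K] y) =
      Coalgebra.counit (R := K) x * Coalgebra.counit (R := K) y := by
    rw [TensorProduct.counit_tmul, smul_eq_mul, mul_comm]
  simp [piL_tmul, h]

lemma comul_comp_piL :
    (Coalgebra.comul : H →ₗ[K] H ⊗[K] H) ∘ₗ piL K H =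
      TensorProduct.map (piL K H) (piL K H) ∘ₗ (Coalgebra.comul : H ⊗[K] H →ₗ[K] (H ⊗[K] H) ⊗[K] (H ⊗[K] H)) := by
  apply TensorProduct.ext'
  intro x y
  rw [LinearMap.comp_apply, LinearMap.comp_apply, piL_tmul, map_smul,
    comul_tmul_eq (ℛ K x) (ℛ K y), map_sum]
  have key : ∀ i, TensorProduct.map (piL K H) (piL K H)
      (∑ j ∈ (ℛ K y).index, ((ℛ K x).left i ⊗ₜ[K] (ℛ K y).left j) ⊗ₜ[K]
        ((ℛ K x).right i ⊗ₜ[K] (ℛ K y).right j)) =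
      (Coalgebra.counit (R := K) ((ℛ K x).left i) *
        Coalgebra.counit (R := K) ((ℛ K x).right i)) •
        Coalgebra.comul (R := K) y := by
    intro i
    rw [map_sum, ← (ℛ K y).eq, Finset.smul_sum]
    refine Finset.sum_congr rfl fun j _ => ?_
    simp only [TensorProduct.map_tmul, piL_tmul, TensorProduct.smul_tmul',
      TensorProduct.tmul_smul, smul_smul]
    rw [mul_comm]
  rw [Finset.sum_congr rfl (fun i _ => key i), ← Finset.sum_smul]
  congr 1
  have := sum_counit_smul (ℛ K x) (Coalgebra.counit (R := K) (A := H))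
  simpa [smul_eq_mul] using this.symm

end Pi

section Main

open Coalgebra HopfAlgebra

variable {K : Type u} [Field K] {H : Type u} [Ring H] [HopfAlgebra K H]

/-- `ρ : y ↦ y₁ ⊗ S y₂`. -/
noncomputable def rho (K : Type u) [Field K] (H : Type u) [Ring H] [HopfAlgebra K H] :
    H →ₗ[K] H ⊗[K] H :=
  TensorProduct.map LinearMap.id (HopfAlgebra.antipode (R := K)) ∘ₗ Coalgebra.comul

/-- `σ : y ↦ S y₁ ⊗ y₂`. -/
noncomputable def sig (K : Type u) [Field K] (H : Type u) [Ring H] [HopfAlgebra K H] :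
    H →ₗ[K] H ⊗[K] H :=
  TensorProduct.map (HopfAlgebra.antipode (R := K)) LinearMap.id ∘ₗ Coalgebra.comul

lemma rho_apply {ι : Type*} {y : H} (r : Coalgebra.Repr K y ι) :
    rho K H y = ∑ i ∈ r.index, r.left i ⊗ₜ[K] antipode (R := K) (r.right i) := by
  rw [rho, LinearMap.comp_apply, ← r.eq, map_sum]
  simp

lemma sig_apply {ι : Type*} {y : H} (r : Coalgebra.Repr K y ι) :
    sig K H y = ∑ i ∈ r.index, antipode (R := K) (r.left i) ⊗ₜ[K] r.right i := by
  rw [sig, LinearMap.comp_apply, ← r.eq, map_sum]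
  simp

lemma gamma_apply (α : H ⊗[K] H →ₗ[K] K) {ι : Type*} {y : H} (r : Coalgebra.Repr K y ι) :
    cocycleGamma K H α y = ∑ i ∈ r.index, α (r.left i ⊗ₜ[K] antipode (R := K) (r.right i)) := by
  rw [cocycleGamma, LinearMap.comp_apply, LinearMap.comp_apply, ← r.eq, map_sum, map_sum]
  simp

/-- `β₀ : x ⊗ y ↦ α(x y₁ ⊗ S y₂)`. -/
noncomputable def beta0 (α : H ⊗[K] H →ₗ[K] K) : H ⊗[K] H →ₗ[K] K :=
  α ∘ₗ TensorProduct.map (LinearMap.mul' K H) LinearMap.id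
    ∘ₗ (TensorProduct.assoc K H H H).symm.toLinearMap ∘ₗ LinearMap.lTensor H (rho K H)

lemma beta0_tmul (α : H ⊗[K] H →ₗ[K] K) {ι : Type*} (c d : H) (rd : Coalgebra.Repr K d ι) :
    beta0 α (c ⊗ₜ[K] d) =
      ∑ j ∈ rd.index, α ((c * rd.left j) ⊗ₜ[K] antipode (R := K) (rd.right j)) := by
  rw [beta0]
  simp only [LinearMap.comp_apply, LinearMap.lTensor_tmul]
  rw [rho_apply rd, TensorProduct.tmul_sum, map_sum, map_sum, map_sum]
  refine Finset.sum_congr rfl fun j _ => ?_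
  simp

/-- Evaluation of `cocycleLHS` at `x ⊗ (u ⊗ v)`. -/
lemma cocycleLHS_eval (α : H ⊗[K] H →ₗ[K] K) (x u v : H) :
    cocycleLHS K H α (x ⊗ₜ[K] (u ⊗ₜ[K] v)) =
      ∑ i ∈ (ℛ K x).index, ∑ k ∈ (ℛ K u).index,
        α ((ℛ K x).left i ⊗ₜ[K] (ℛ K u).left k) *
          α (((ℛ K x).right i * (ℛ K u).right k) ⊗ₜ[K] v) := by
  rw [cocycleLHS, convH_tmul_repr _ _ (ℛ K x) (tensorRepr (ℛ K u) (ℛ K v))]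
  simp only [tensorRepr_left, tensorRepr_right]
  refine Finset.sum_congr rfl fun i _ => ?_
  show ∑ p ∈ (ℛ K u).index ×ˢ (ℛ K v).index, _ = _
  rw [Finset.sum_product]
  refine Finset.sum_congr rfl fun k _ => ?_
  have heval : ∀ l ∈ (ℛ K v).index,
      (LinearMap.mul' K K ∘ₗ TensorProduct.map α Coalgebra.counit ∘ₗ
        (TensorProduct.assoc K H H H).symm.toLinearMap)
        ((ℛ K x).left i ⊗ₜ[K] ((ℛ K u).left k ⊗ₜ[K] (ℛ K v).left l)) *
      (α ∘ₗ TensorProduct.map (LinearMap.mul' K H) LinearMap.id ∘ₗ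
        (TensorProduct.assoc K H H H).symm.toLinearMap)
        ((ℛ K x).right i ⊗ₜ[K] ((ℛ K u).right k ⊗ₜ[K] (ℛ K v).right l)) =
      Coalgebra.counit (R := K) ((ℛ K v).left l) •
        ((α ((ℛ K x).left i ⊗ₜ[K] (ℛ K u).left k)) •
          (α ∘ₗ TensorProduct.mk K H H ((ℛ K x).right i * (ℛ K u).right k)))
            ((ℛ K v).right l) := by
    intro l _
    simp only [LinearMap.comp_apply, LinearEquiv.coe_coe, TensorProduct.assoc_symm_tmul,
      TensorProduct.map_tmul, LinearMap.mul'_apply, LinearMap.id_coe, id_eq,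
      TensorProduct.mk_apply, LinearMap.smul_apply, smul_eq_mul]
    ring
  rw [Finset.sum_congr rfl heval, _root_.sum_counit_smul (ℛ K v)]
  simp

/-- Evaluation of `cocycleRHS` at `x ⊗ (u ⊗ v)`. -/
lemma cocycleRHS_eval (α : H ⊗[K] H →ₗ[K] K) (x u v : H) :
    cocycleRHS K H α (x ⊗ₜ[K] (u ⊗ₜ[K] v)) =
      ∑ k ∈ (ℛ K u).index, ∑ l ∈ (ℛ K v).index,
        α ((ℛ K u).left k ⊗ₜ[K] (ℛ K v).left l) *
          α (x ⊗ₜ[K] ((ℛ K u).right k * (ℛ K v).right l)) := by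
  rw [cocycleRHS, convH_tmul_repr _ _ (ℛ K x) (tensorRepr (ℛ K u) (ℛ K v))]
  simp only [tensorRepr_left, tensorRepr_right]
  have heval : ∀ i ∈ (ℛ K x).index, ∀ p ∈ (ℛ K u).index ×ˢ (ℛ K v).index,
      (LinearMap.mul' K K ∘ₗ TensorProduct.map Coalgebra.counit α)
        ((ℛ K x).left i ⊗ₜ[K] ((ℛ K u).left p.1 ⊗ₜ[K] (ℛ K v).left p.2)) *
      (α ∘ₗ TensorProduct.map LinearMap.id (LinearMap.mul' K H))
        ((ℛ K x).right i ⊗ₜ[K] ((ℛ K u).right p.1 ⊗ₜ[K] (ℛ K v).right p.2)) =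
      Coalgebra.counit (R := K) ((ℛ K x).left i) •
        ((α ((ℛ K u).left p.1 ⊗ₜ[K] (ℛ K v).left p.2)) •
          (α ∘ₗ (TensorProduct.mk K H H).flip ((ℛ K u).right p.1 * (ℛ K v).right p.2)))
            ((ℛ K x).right i) := by
    intro i _ p _
    simp only [LinearMap.comp_apply, TensorProduct.map_tmul, LinearMap.mul'_apply,
      LinearMap.id_coe, id_eq, LinearMap.flip_apply, TensorProduct.mk_apply,
      LinearMap.smul_apply, smul_eq_mul]
    ring
  calc ∑ i ∈ (ℛ K x).index, ∑ p ∈ (ℛ K u).index ×ˢ (ℛ K v).index, _ * _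
      = ∑ p ∈ (ℛ K u).index ×ˢ (ℛ K v).index, ∑ i ∈ (ℛ K x).index,
          Coalgebra.counit (R := K) ((ℛ K x).left i) •
            ((α ((ℛ K u).left p.1 ⊗ₜ[K] (ℛ K v).left p.2)) •
              (α ∘ₗ (TensorProduct.mk K H H).flip ((ℛ K u).right p.1 * (ℛ K v).right p.2)))
                ((ℛ K x).right i) := by
        rw [Finset.sum_congr rfl fun i hi => Finset.sum_congr rfl fun p hp => heval i hi p hp]
        exact Finset.sum_comm
    _ = ∑ p ∈ (ℛ K u).index ×ˢ (ℛ K v).index,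
          α ((ℛ K u).left p.1 ⊗ₜ[K] (ℛ K v).left p.2) *
            α (x ⊗ₜ[K] ((ℛ K u).right p.1 * (ℛ K v).right p.2)) := by
        refine Finset.sum_congr rfl fun p _ => ?_
        rw [_root_.sum_counit_smul (ℛ K x)]
        simp
    _ = _ := by rw [← Finset.sum_product']

/-- `Ψ : a ⊗ (b ⊗ c) ↦ α(p ⊗ a) α((q b) ⊗ S c)`. -/
noncomputable def PsiA (α : H ⊗[K] H →ₗ[K] K) (p q : H) : H ⊗[K] (H ⊗[K] H) →ₗ[K] K :=
  LinearMap.mul' K K ∘ₗ TensorProduct.map (α ∘ₗ TensorProduct.mk K H H p)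
    (α ∘ₗ TensorProduct.map (LinearMap.mulLeft K q) (HopfAlgebra.antipode (R := K)))

lemma PsiA_apply (α : H ⊗[K] H →ₗ[K] K) (p q a b c : H) :
    PsiA α p q (a ⊗ₜ[K] (b ⊗ₜ[K] c)) =
      α (p ⊗ₜ[K] a) * α ((q * b) ⊗ₜ[K] antipode (R := K) c) := by
  simp [PsiA]

/-- Equality A: `cocycleLHS α ∘ θ = α * β₀`. -/
lemma eqA (α : H ⊗[K] H →ₗ[K] K) :
    cocycleLHS K H α ∘ₗ LinearMap.lTensor H (rho K H) = convH K α (beta0 α) := by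
  apply TensorProduct.ext'
  intro x y
  have key := Coalgebra.sum_tmul_tmul_eq (ℛ K y) (fun j => ℛ K ((ℛ K y).left j))
    (fun j => ℛ K ((ℛ K y).right j))
  have keyi : ∀ i,
      ∑ j ∈ (ℛ K y).index, ∑ k ∈ (ℛ K ((ℛ K y).left j)).index,
        α ((ℛ K x).left i ⊗ₜ[K] (ℛ K ((ℛ K y).left j)).left k) *
          α (((ℛ K x).right i * (ℛ K ((ℛ K y).left j)).right k) ⊗ₜ[K]
            antipode (R := K) ((ℛ K y).right j)) =
      ∑ j ∈ (ℛ K y).index, ∑ k ∈ (ℛ K ((ℛ K y).right j)).index,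
        α ((ℛ K x).left i ⊗ₜ[K] (ℛ K y).left j) *
          α (((ℛ K x).right i * (ℛ K ((ℛ K y).right j)).left k) ⊗ₜ[K]
            antipode (R := K) ((ℛ K ((ℛ K y).right j)).right k)) := by
    intro i
    have := congrArg (PsiA α ((ℛ K x).left i) ((ℛ K x).right i)) key
    simp only [map_sum, PsiA_apply] at this
    exact this
  calc (cocycleLHS K H α ∘ₗ LinearMap.lTensor H (rho K H)) (x ⊗ₜ[K] y)
      = ∑ j ∈ (ℛ K y).index,
          cocycleLHS K H α (x ⊗ₜ[K] ((ℛ K y).left j ⊗ₜ[K] antipode (R := K) ((ℛ K y).right j))) := by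
        rw [LinearMap.comp_apply, LinearMap.lTensor_tmul, rho_apply (ℛ K y),
          TensorProduct.tmul_sum, map_sum]
    _ = ∑ j ∈ (ℛ K y).index, ∑ i ∈ (ℛ K x).index, ∑ k ∈ (ℛ K ((ℛ K y).left j)).index,
          α ((ℛ K x).left i ⊗ₜ[K] (ℛ K ((ℛ K y).left j)).left k) *
            α (((ℛ K x).right i * (ℛ K ((ℛ K y).left j)).right k) ⊗ₜ[K]
              antipode (R := K) ((ℛ K y).right j)) := by
        exact Finset.sum_congr rfl fun j _ => cocycleLHS_eval α x _ _
    _ = ∑ i ∈ (ℛ K x).index, ∑ j ∈ (ℛ K y).index, ∑ k ∈ (ℛ K ((ℛ K y).left j)).index,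
          α ((ℛ K x).left i ⊗ₜ[K] (ℛ K ((ℛ K y).left j)).left k) *
            α (((ℛ K x).right i * (ℛ K ((ℛ K y).left j)).right k) ⊗ₜ[K]
              antipode (R := K) ((ℛ K y).right j)) := Finset.sum_comm
    _ = ∑ i ∈ (ℛ K x).index, ∑ j ∈ (ℛ K y).index, ∑ k ∈ (ℛ K ((ℛ K y).right j)).index,
          α ((ℛ K x).left i ⊗ₜ[K] (ℛ K y).left j) *
            α (((ℛ K x).right i * (ℛ K ((ℛ K y).right j)).left k) ⊗ₜ[K]
              antipode (R := K) ((ℛ K ((ℛ K y).right j)).right k)) :=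
        Finset.sum_congr rfl fun i _ => keyi i
    _ = convH K α (beta0 α) (x ⊗ₜ[K] y) := by
        rw [convH_tmul_repr α (beta0 α) (ℛ K x) (ℛ K y)]
        refine Finset.sum_congr rfl fun i _ => Finset.sum_congr rfl fun j _ => ?_
        rw [beta0_tmul α _ _ (ℛ K ((ℛ K y).right j)), Finset.mul_sum]

/-- `Φ_x : (u⊗v)⊗c ↦ α(u⊗v) α(x⊗c)`. -/
noncomputable def PhiX (α : H ⊗[K] H →ₗ[K] K) (x : H) : (H ⊗[K] H) ⊗[K] H →ₗ[K] K :=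
  LinearMap.mul' K K ∘ₗ TensorProduct.map α (α ∘ₗ TensorProduct.mk K H H x)

/-- `G : u⊗v ↦ (u₁⊗v₁)⊗(u₂v₂)`. -/
noncomputable def Gmul (K : Type u) [Field K] (H : Type u) [Ring H] [HopfAlgebra K H] :
    H ⊗[K] H →ₗ[K] (H ⊗[K] H) ⊗[K] H :=
  LinearMap.lTensor (H ⊗[K] H) (LinearMap.mul' K H) ∘ₗ
    (Coalgebra.comul (R := K) (A := H ⊗[K] H))

lemma Gmul_tmul {ι κ : Type*} (u v : H) (ru : Coalgebra.Repr K u ι) (rv : Coalgebra.Repr K v κ) :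
    Gmul K H (u ⊗ₜ[K] v) = ∑ i ∈ ru.index, ∑ j ∈ rv.index,
      (ru.left i ⊗ₜ[K] rv.left j) ⊗ₜ[K] (ru.right i * rv.right j) := by
  rw [Gmul, LinearMap.comp_apply, comul_tmul_eq ru rv, map_sum]
  refine Finset.sum_congr rfl fun i _ => ?_
  rw [map_sum]
  exact Finset.sum_congr rfl fun j _ => by simp

lemma eqB1 (α : H ⊗[K] H →ₗ[K] K) (x : H) :
    cocycleRHS K H α ∘ₗ TensorProduct.mk K H (H ⊗[K] H) x = PhiX α x ∘ₗ Gmul K H := by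
  apply TensorProduct.ext'
  intro u v
  rw [LinearMap.comp_apply, LinearMap.comp_apply, TensorProduct.mk_apply,
    cocycleRHS_eval α x u v, Gmul_tmul u v (ℛ K u) (ℛ K v), map_sum]
  refine Finset.sum_congr rfl fun k _ => ?_
  rw [map_sum]
  refine Finset.sum_congr rfl fun l _ => ?_
  simp [PhiX]

/-- A repr of `comul (S b)` from a repr of `comul b`. -/
noncomputable def antipodeRepr {ι : Type*} {b : H} (r : Coalgebra.Repr K b ι) :
    Coalgebra.Repr K (antipode (R := K) b) ι where
  index := r.index
  left := fun i => antipode (R := K) (r.right i)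
  right := fun i => antipode (R := K) (r.left i)
  eq := (comul_antipode_repr r).symm

/-- `uu : y ↦ (y₁ ⊗ 1) ⊗ y₂`. -/
noncomputable def uuMap (K : Type u) [Field K] (H : Type u) [Ring H] [HopfAlgebra K H] :
    H →ₗ[K] (H ⊗[K] H) ⊗[K] H :=
  (Algebra.TensorProduct.map (Algebra.TensorProduct.includeLeft (S := K) (R := K) (A := H)
    (B := H)) (AlgHom.id K H)).toLinearMap ∘ₗ Coalgebra.comul

/-- `ww : y ↦ (1 ⊗ y₁) ⊗ y₂`. -/
noncomputable def wwMap (K : Type u) [Field K] (H : Type u) [Ring H] [HopfAlgebra K H] :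
    H →ₗ[K] (H ⊗[K] H) ⊗[K] H :=
  (Algebra.TensorProduct.map (Algebra.TensorProduct.includeRight (R := K) (A := H)
    (B := H)) (AlgHom.id K H)).toLinearMap ∘ₗ Coalgebra.comul

/-- `κ : y ↦ (y₁ ⊗ S y₂) ⊗ 1`. -/
noncomputable def kapMap (K : Type u) [Field K] (H : Type u) [Ring H] [HopfAlgebra K H] :
    H →ₗ[K] (H ⊗[K] H) ⊗[K] H :=
  (Algebra.TensorProduct.includeLeft (S := K) (R := K) (A := H ⊗[K] H)
    (B := H)).toLinearMap ∘ₗ rho K H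

lemma eqB2 (α : H ⊗[K] H →ₗ[K] K) :
    Gmul K H ∘ₗ rho K H = convH K (uuMap K H) (wwMap K H ∘ₗ antipode (R := K)) := by
  ext y
  rw [LinearMap.comp_apply, rho_apply (ℛ K y), map_sum,
    convH_apply_repr _ _ (ℛ K y)]
  refine Finset.sum_congr rfl fun j _ => ?_
  set a := (ℛ K y).left j
  set b := (ℛ K y).right j
  rw [Gmul_tmul a (antipode (R := K) b) (ℛ K a) (antipodeRepr (ℛ K b))]
  have hu : uuMap K H a = ∑ i ∈ (ℛ K a).index,
      ((ℛ K a).left i ⊗ₜ[K] (1 : H)) ⊗ₜ[K] (ℛ K a).right i := by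
    rw [uuMap, LinearMap.comp_apply, ← (ℛ K a).eq, map_sum]
    exact Finset.sum_congr rfl fun i _ => by simp
  have hw : (wwMap K H ∘ₗ antipode (R := K)) b = ∑ i ∈ (ℛ K b).index,
      ((1 : H) ⊗ₜ[K] antipode (R := K) ((ℛ K b).right i)) ⊗ₜ[K]
        antipode (R := K) ((ℛ K b).left i) := by
    rw [LinearMap.comp_apply, wwMap, LinearMap.comp_apply, comul_antipode_repr (ℛ K b), map_sum]
    exact Finset.sum_congr rfl fun i _ => by simp
  rw [hu, hw, Finset.sum_mul_sum]
  refine Finset.sum_congr rfl fun i _ => Finset.sum_congr rfl fun l _ => ?_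
  show _ = (((ℛ K a).left i ⊗ₜ[K] (1 : H)) ⊗ₜ[K] (ℛ K a).right i) *
      (((1 : H) ⊗ₜ[K] antipode (R := K) ((ℛ K b).right l)) ⊗ₜ[K]
        antipode (R := K) ((ℛ K b).left l))
  rw [Algebra.TensorProduct.tmul_mul_tmul, Algebra.TensorProduct.tmul_mul_tmul]
  simp [antipodeRepr]

noncomputable def psi1 (K : Type u) [Field K] (H : Type u) [Ring H] [HopfAlgebra K H] :
    H →ₐ[K] (H ⊗[K] H) ⊗[K] H :=
  (Algebra.TensorProduct.includeLeft (S := K) (R := K) (A := H ⊗[K] H) (B := H)).comp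
    (Algebra.TensorProduct.includeLeft (S := K) (R := K) (A := H) (B := H))

noncomputable def psi2 (K : Type u) [Field K] (H : Type u) [Ring H] [HopfAlgebra K H] :
    H →ₐ[K] (H ⊗[K] H) ⊗[K] H :=
  (Algebra.TensorProduct.includeLeft (S := K) (R := K) (A := H ⊗[K] H) (B := H)).comp
    (Algebra.TensorProduct.includeRight (R := K) (A := H) (B := H))

noncomputable def psi3 (K : Type u) [Field K] (H : Type u) [Ring H] [HopfAlgebra K H] :
    H →ₐ[K] (H ⊗[K] H) ⊗[K] H :=
  Algebra.TensorProduct.includeRight (R := K) (A := H ⊗[K] H) (B := H)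

@[simp] lemma psi1_apply (h : H) : psi1 K H h = (h ⊗ₜ[K] (1 : H)) ⊗ₜ[K] (1 : H) := rfl
@[simp] lemma psi2_apply (h : H) : psi2 K H h = ((1 : H) ⊗ₜ[K] h) ⊗ₜ[K] (1 : H) := rfl
@[simp] lemma psi3_apply (h : H) : psi3 K H h = ((1 : H) ⊗ₜ[K] (1 : H)) ⊗ₜ[K] h := rfl

lemma eqB3 : convH K (uuMap K H) (wwMap K H ∘ₗ antipode (R := K)) = kapMap K H := by
  have hu : uuMap K H = convH K (psi1 K H).toLinearMap (psi3 K H).toLinearMap := by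
    ext a
    rw [convH_apply_repr _ _ (ℛ K a)]
    rw [uuMap, LinearMap.comp_apply, ← (ℛ K a).eq, map_sum]
    refine Finset.sum_congr rfl fun i _ => ?_
    show (Algebra.TensorProduct.map (Algebra.TensorProduct.includeLeft (S := K) (R := K)
      (A := H) (B := H)) (AlgHom.id K H)).toLinearMap ((ℛ K a).left i ⊗ₜ[K] (ℛ K a).right i)
      = psi1 K H ((ℛ K a).left i) * psi3 K H ((ℛ K a).right i)
    simp [Algebra.TensorProduct.tmul_mul_tmul]
  have hw : wwMap K H = convH K (psi2 K H).toLinearMap (psi3 K H).toLinearMap := by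
    ext a
    rw [convH_apply_repr _ _ (ℛ K a)]
    rw [wwMap, LinearMap.comp_apply, ← (ℛ K a).eq, map_sum]
    refine Finset.sum_congr rfl fun i _ => ?_
    show (Algebra.TensorProduct.map (Algebra.TensorProduct.includeRight (R := K)
      (A := H) (B := H)) (AlgHom.id K H)).toLinearMap ((ℛ K a).left i ⊗ₜ[K] (ℛ K a).right i)
      = psi2 K H ((ℛ K a).left i) * psi3 K H ((ℛ K a).right i)
    simp [Algebra.TensorProduct.tmul_mul_tmul]
  have hk : kapMap K H = convH K (psi1 K H).toLinearMap
      ((psi2 K H).toLinearMap ∘ₗ antipode (R := K)) := by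
    ext a
    rw [convH_apply_repr _ _ (ℛ K a)]
    rw [kapMap, LinearMap.comp_apply, rho_apply (ℛ K a), map_sum]
    refine Finset.sum_congr rfl fun i _ => ?_
    show (Algebra.TensorProduct.includeLeft (S := K) (R := K) (A := H ⊗[K] H)
      (B := H)).toLinearMap ((ℛ K a).left i ⊗ₜ[K] antipode (R := K) ((ℛ K a).right i))
      = psi1 K H ((ℛ K a).left i) * psi2 K H (antipode (R := K) ((ℛ K a).right i))
    simp [Algebra.TensorProduct.tmul_mul_tmul]
  -- ww as an algebra hom
  have hwalg : wwMap K H = ((Algebra.TensorProduct.map (Algebra.TensorProduct.includeRight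
      (R := K) (A := H) (B := H)) (AlgHom.id K H)).comp
      (Bialgebra.comulAlgHom K H)).toLinearMap := by
    rfl
  have hwv : convH K (wwMap K H) (wwMap K H ∘ₗ antipode (R := K)) =
      convUnit K H ((H ⊗[K] H) ⊗[K] H) := by
    rw [hwalg]
    exact convH_algHom_antipode _
  have hψ₂inv : convH K ((psi2 K H).toLinearMap ∘ₗ antipode (R := K)) (psi2 K H).toLinearMap =
      convUnit K H ((H ⊗[K] H) ⊗[K] H) := convH_antipode_algHom (psi2 K H)
  have hkw : convH K (kapMap K H) (wwMap K H) = uuMap K H := by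
    rw [hk, hw, hu, convH_assoc, ← convH_assoc ((psi2 K H).toLinearMap ∘ₗ antipode (R := K)),
      hψ₂inv, convH_unit_left]
  calc convH K (uuMap K H) (wwMap K H ∘ₗ antipode (R := K))
      = convH K (convH K (kapMap K H) (wwMap K H)) (wwMap K H ∘ₗ antipode (R := K)) := by
        rw [hkw]
    _ = convH K (kapMap K H) (convH K (wwMap K H) (wwMap K H ∘ₗ antipode (R := K))) :=
        convH_assoc _ _ _
    _ = kapMap K H := by rw [hwv, convH_unit_right]

/-- Equality B: `cocycleRHS α ∘ θ = γ ∘ π`. -/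
lemma eqB (α : H ⊗[K] H →ₗ[K] K)
    (hunit_right : ∀ x : H, α (x ⊗ₜ[K] 1) = Coalgebra.counit x) :
    cocycleRHS K H α ∘ₗ LinearMap.lTensor H (rho K H) =
      cocycleGamma K H α ∘ₗ piL K H := by
  apply TensorProduct.ext'
  intro x y
  have h1 : cocycleRHS K H α (x ⊗ₜ[K] rho K H y) = PhiX α x (Gmul K H (rho K H y)) := by
    have := congrFun (congrArg DFunLike.coe (eqB1 α x)) (rho K H y)
    simpa using this
  have h2 : Gmul K H (rho K H y) = kapMap K H y := by
    have := congrFun (congrArg DFunLike.coe ((eqB2 α).trans (eqB3 (H := H)))) y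
    simpa using this
  rw [LinearMap.comp_apply, LinearMap.lTensor_tmul, h1, h2, LinearMap.comp_apply, piL_tmul,
    map_smul, kapMap, LinearMap.comp_apply, rho_apply (ℛ K y), map_sum, map_sum,
    gamma_apply α (ℛ K y), Finset.smul_sum]
  refine Finset.sum_congr rfl fun j _ => ?_
  show PhiX α x ((((ℛ K y).left j ⊗ₜ[K] antipode (R := K) ((ℛ K y).right j)) ⊗ₜ[K] (1 : H))) = _
  simp only [PhiX, LinearMap.comp_apply, TensorProduct.map_tmul, TensorProduct.mk_apply,
    LinearMap.mul'_apply, hunit_right x, smul_eq_mul]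
  ring

/-- The key identity: `γ ∘ π = α * β₀`. -/
lemma key_identity (α : H ⊗[K] H →ₗ[K] K)
    (hcocycle : cocycleLHS K H α = cocycleRHS K H α)
    (hunit_right : ∀ x : H, α (x ⊗ₜ[K] 1) = Coalgebra.counit x) :
    cocycleGamma K H α ∘ₗ piL K H = convH K α (beta0 α) := by
  rw [← eqB α hunit_right, ← hcocycle, eqA]

/-- `ΨC : a ⊗ (b ⊗ c) ↦ α((S a · b) ⊗ S c)`. -/
noncomputable def PsiC (α : H ⊗[K] H →ₗ[K] K) : H ⊗[K] (H ⊗[K] H) →ₗ[K] K :=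
  α ∘ₗ TensorProduct.map (LinearMap.mul' K H ∘ₗ
      LinearMap.rTensor H (HopfAlgebra.antipode (R := K))) (HopfAlgebra.antipode (R := K))
    ∘ₗ (TensorProduct.assoc K H H H).symm.toLinearMap

lemma PsiC_apply (α : H ⊗[K] H →ₗ[K] K) (a b c : H) :
    PsiC α (a ⊗ₜ[K] (b ⊗ₜ[K] c)) =
      α ((antipode (R := K) a * b) ⊗ₜ[K] antipode (R := K) c) := by
  simp [PsiC]

/-- `β₀ ∘ σ = ε`. -/
lemma beta0_sig (α : H ⊗[K] H →ₗ[K] K)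
    (hunit_left : ∀ x : H, α (1 ⊗ₜ[K] x) = Coalgebra.counit x) :
    beta0 α ∘ₗ sig K H = (Coalgebra.counit : H →ₗ[K] K) := by
  ext c
  rw [LinearMap.comp_apply, sig_apply (ℛ K c), map_sum]
  have key := congrArg (PsiC α) (Coalgebra.sum_tmul_tmul_eq (ℛ K c)
    (fun j => ℛ K ((ℛ K c).left j)) (fun j => ℛ K ((ℛ K c).right j)))
  simp only [map_sum, PsiC_apply] at key
  calc ∑ i ∈ (ℛ K c).index, beta0 α (antipode (R := K) ((ℛ K c).left i) ⊗ₜ[K] (ℛ K c).right i)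
      = ∑ i ∈ (ℛ K c).index, ∑ j ∈ (ℛ K ((ℛ K c).right i)).index,
          α ((antipode (R := K) ((ℛ K c).left i) * (ℛ K ((ℛ K c).right i)).left j) ⊗ₜ[K]
            antipode (R := K) ((ℛ K ((ℛ K c).right i)).right j)) :=
        Finset.sum_congr rfl fun i _ => beta0_tmul α _ _ (ℛ K ((ℛ K c).right i))
    _ = ∑ i ∈ (ℛ K c).index, ∑ j ∈ (ℛ K ((ℛ K c).left i)).index,
          α ((antipode (R := K) ((ℛ K ((ℛ K c).left i)).left j) *
            (ℛ K ((ℛ K c).left i)).right j) ⊗ₜ[K]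
              antipode (R := K) ((ℛ K c).right i)) := key.symm
    _ = ∑ i ∈ (ℛ K c).index, Coalgebra.counit (R := K) ((ℛ K c).left i) •
          Coalgebra.counit (R := K) ((ℛ K c).right i) := by
        refine Finset.sum_congr rfl fun i _ => ?_
        have hcollapse : ∑ j ∈ (ℛ K ((ℛ K c).left i)).index,
            antipode (R := K) ((ℛ K ((ℛ K c).left i)).left j) *
              (ℛ K ((ℛ K c).left i)).right j =
            algebraMap K H (Coalgebra.counit ((ℛ K c).left i)) :=
          HopfAlgebra.sum_antipode_mul_eq_algebraMap_counit (ℛ K ((ℛ K c).left i))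
        rw [← map_sum α, ← TensorProduct.sum_tmul, hcollapse, Algebra.algebraMap_eq_smul_one,
          ← TensorProduct.smul_tmul', map_smul, hunit_left, _root_.counit_antipode, smul_eq_mul]
    _ = Coalgebra.counit (R := K) c := by
        have := sum_counit_smul (ℛ K c) (Coalgebra.counit (R := K) (A := H))
        simpa using this

/-- `ΨD : a ⊗ (b ⊗ c) ↦ β₀(S a ⊗ b) f(c)`. -/
noncomputable def PsiD (α : H ⊗[K] H →ₗ[K] K) (f : H →ₗ[K] K) :
    H ⊗[K] (H ⊗[K] H) →ₗ[K] K :=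
  LinearMap.mul' K K ∘ₗ TensorProduct.map
    (beta0 α ∘ₗ LinearMap.rTensor H (HopfAlgebra.antipode (R := K))) f
    ∘ₗ (TensorProduct.assoc K H H H).symm.toLinearMap

lemma PsiD_apply (α : H ⊗[K] H →ₗ[K] K) (f : H →ₗ[K] K) (a b c : H) :
    PsiD α f (a ⊗ₜ[K] (b ⊗ₜ[K] c)) =
      beta0 α (antipode (R := K) a ⊗ₜ[K] b) * f c := by
  simp [PsiD]

lemma X_tmul (α : H ⊗[K] H →ₗ[K] K) (f : H →ₗ[K] K) (c d : H) :
    convH K (beta0 α) (f ∘ₗ piL K H) (c ⊗ₜ[K] d) =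
      ∑ j ∈ (ℛ K d).index, beta0 α (c ⊗ₜ[K] (ℛ K d).left j) * f ((ℛ K d).right j) := by
  rw [convH_tmul_repr _ _ (ℛ K c) (ℛ K d)]
  have heval : ∀ i ∈ (ℛ K c).index, ∀ j ∈ (ℛ K d).index,
      beta0 α ((ℛ K c).left i ⊗ₜ[K] (ℛ K d).left j) *
        (f ∘ₗ piL K H) ((ℛ K c).right i ⊗ₜ[K] (ℛ K d).right j) =
      Coalgebra.counit (R := K) ((ℛ K c).right i) •
        ((f ((ℛ K d).right j)) •
          (beta0 α ∘ₗ (TensorProduct.mk K H H).flip ((ℛ K d).left j))) ((ℛ K c).left i) := by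
    intro i _ j _
    simp only [LinearMap.comp_apply, piL_tmul, map_smul, LinearMap.smul_apply,
      LinearMap.flip_apply, TensorProduct.mk_apply, smul_eq_mul]
    ring
  rw [Finset.sum_congr rfl fun i hi => Finset.sum_congr rfl fun j hj => heval i hi j hj,
    Finset.sum_comm]
  refine Finset.sum_congr rfl fun j _ => ?_
  rw [sum_smul_counit (ℛ K c)]
  simp [mul_comm]

lemma claim1 (α : H ⊗[K] H →ₗ[K] K) (f : H →ₗ[K] K) :
    convH K (beta0 α) (f ∘ₗ piL K H) ∘ₗ sig K H =
      convH K (beta0 α ∘ₗ sig K H) f := by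
  ext y
  have key := congrArg (PsiD α f) (Coalgebra.sum_tmul_tmul_eq (ℛ K y)
    (fun j => ℛ K ((ℛ K y).left j)) (fun j => ℛ K ((ℛ K y).right j)))
  simp only [map_sum, PsiD_apply] at key
  calc (convH K (beta0 α) (f ∘ₗ piL K H) ∘ₗ sig K H) y
      = ∑ i ∈ (ℛ K y).index, convH K (beta0 α) (f ∘ₗ piL K H)
          (antipode (R := K) ((ℛ K y).left i) ⊗ₜ[K] (ℛ K y).right i) := by
        rw [LinearMap.comp_apply, sig_apply (ℛ K y), map_sum]
    _ = ∑ i ∈ (ℛ K y).index, ∑ j ∈ (ℛ K ((ℛ K y).right i)).index,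
          beta0 α (antipode (R := K) ((ℛ K y).left i) ⊗ₜ[K]
            (ℛ K ((ℛ K y).right i)).left j) * f ((ℛ K ((ℛ K y).right i)).right j) :=
        Finset.sum_congr rfl fun i _ => X_tmul α f _ _
    _ = ∑ i ∈ (ℛ K y).index, ∑ j ∈ (ℛ K ((ℛ K y).left i)).index,
          beta0 α (antipode (R := K) ((ℛ K ((ℛ K y).left i)).left j) ⊗ₜ[K]
            (ℛ K ((ℛ K y).left i)).right j) * f ((ℛ K y).right i) := key.symm
    _ = ∑ i ∈ (ℛ K y).index, (beta0 α ∘ₗ sig K H) ((ℛ K y).left i) * f ((ℛ K y).right i) := by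
        refine Finset.sum_congr rfl fun i _ => ?_
        rw [LinearMap.comp_apply, sig_apply (ℛ K ((ℛ K y).left i)), map_sum, Finset.sum_mul]
    _ = convH K (beta0 α ∘ₗ sig K H) f y := (convH_apply_repr _ _ (ℛ K y)).symm

lemma extract (α : H ⊗[K] H →ₗ[K] K)
    (hunit_left : ∀ x : H, α (1 ⊗ₜ[K] x) = Coalgebra.counit x) (f : H →ₗ[K] K) :
    convH K (beta0 α) (f ∘ₗ piL K H) ∘ₗ sig K H = f := by
  rw [claim1, beta0_sig α hunit_left, ← convUnit_eq_counit, convH_unit_left]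

end Main

/-- For `α` satisfying the 2-cocycle and unity conditions, `α` is
convolution invertible in `(H ⊗ H)*` iff `γ(x) = α(x₁, S(x₂))` is convolution invertible
in `H*`. -/
theorem cocycle_conv_invertible_iff_gamma_invertible
    (K H : Type u) [Field K] [CharZero K] [Ring H] [HopfAlgebra K H]
    [FiniteDimensional K H]
    (α : H ⊗[K] H →ₗ[K] K)
    (hcocycle : cocycleLHS K H α = cocycleRHS K H α)
    (hunit_left : ∀ x : H, α (1 ⊗ₜ[K] x) = Coalgebra.counit x)
    (hunit_right : ∀ x : H, α (x ⊗ₜ[K] 1) = Coalgebra.counit x) :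
    (∃ β : H ⊗[K] H →ₗ[K] K,
        convH K α β = Coalgebra.counit ∧ convH K β α = Coalgebra.counit) ↔
    (∃ γ' : H →ₗ[K] K,
        convH K (cocycleGamma K H α) γ' = Coalgebra.counit ∧
        convH K γ' (cocycleGamma K H α) = Coalgebra.counit) := by
  constructor
  · rintro ⟨β, hαβ, hβα⟩
    have hinj : ∀ f : H →ₗ[K] K, convH K (cocycleGamma K H α) f = 0 → f = 0 := by
      intro f hf
      have h0 : convH K (cocycleGamma K H α ∘ₗ piL K H) (f ∘ₗ piL K H) = 0 := by
        rw [← convH_comp_coalgHom (piL K H) comul_comp_piL, hf]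
        exact LinearMap.zero_comp _
      rw [key_identity α hcocycle hunit_right, convH_assoc] at h0
      have h1 : convH K (beta0 α) (f ∘ₗ piL K H) = 0 := by
        calc convH K (beta0 α) (f ∘ₗ piL K H)
            = convH K (convUnit K (H ⊗[K] H) K) (convH K (beta0 α) (f ∘ₗ piL K H)) :=
              (convH_unit_left _).symm
          _ = convH K (convH K β α) (convH K (beta0 α) (f ∘ₗ piL K H)) := by
              rw [convUnit_eq_counit, hβα]
          _ = convH K β (convH K α (convH K (beta0 α) (f ∘ₗ piL K H))) := convH_assoc _ _ _
          _ = convH K β 0 := by rw [h0]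
          _ = 0 := convH_zero_right β
      have h2 := extract α hunit_left f
      rw [h1] at h2
      simpa using h2.symm
    obtain ⟨γ', hγγ'⟩ := convH_exists_inv (a := cocycleGamma K H α) hinj
    refine ⟨γ', ?_, ?_⟩
    · rw [← convUnit_eq_counit]; exact hγγ'
    · rw [← convUnit_eq_counit]; exact convH_inv_symm hγγ'
  · rintro ⟨γ', h1, h2⟩
    have hright : convH K α (convH K (beta0 α) (γ' ∘ₗ piL K H)) = Coalgebra.counit := by
      calc convH K α (convH K (beta0 α) (γ' ∘ₗ piL K H))
          = convH K (convH K α (beta0 α)) (γ' ∘ₗ piL K H) := (convH_assoc _ _ _).symm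
        _ = convH K (cocycleGamma K H α ∘ₗ piL K H) (γ' ∘ₗ piL K H) := by
            rw [← key_identity α hcocycle hunit_right]
        _ = convH K (cocycleGamma K H α) γ' ∘ₗ piL K H :=
            (convH_comp_coalgHom (piL K H) comul_comp_piL _ _).symm
        _ = (Coalgebra.counit : H →ₗ[K] K) ∘ₗ piL K H := by rw [h1]
        _ = Coalgebra.counit := counit_comp_piL
    refine ⟨convH K (beta0 α) (γ' ∘ₗ piL K H), hright, ?_⟩
    rw [← convUnit_eq_counit] at hright ⊢
    exact convH_inv_symm hright
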